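/- arXiv:1701.06116 — 3 statements merged into one kernel-verified Lean document; each statement's English description precedes it below -/
import Mathlib

section
/- Let X, Y, Z be Banach spaces over ℝ (or ℂ), R ∈ L(Z, X), O ∈ L(Z, Y), and let C₀ > 0, ε₀ > 0. Suppose that for each x* ∈ X* there exists y* ∈ Y* such that (1/C₀)‖y*‖²_{Y*} + (1/ε₀)‖R*x* − O*y*‖²_{Z*} ≤ ‖x*‖²_{X*}. Then for every z ∈ Z, ‖Rz‖²_X ≤ C₀‖Oz‖²_Y + ε₀‖z‖²_Z. -/
/-- If for each `x* ∈ X*` there is `y* ∈ Y*` with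
`(1/C₀)‖y*‖² + (1/ε₀)‖R*x* − O*y*‖² ≤ ‖x*‖²`, then for every `z ∈ Z`,
`‖Rz‖² ≤ C₀‖Oz‖² + ε₀‖z‖²`.  Here the Banach-space adjoint `R*x*` is `x* ∘ R`. -/
theorem controllability_of_observability
    {X Y Z : Type*} [NormedAddCommGroup X] [NormedSpace ℝ X]
    [NormedAddCommGroup Y] [NormedSpace ℝ Y]
    [NormedAddCommGroup Z] [NormedSpace ℝ Z]
    (R : Z →L[ℝ] X) (O : Z →L[ℝ] Y) (C₀ ε₀ : ℝ) (hC : 0 < C₀) (hε : 0 < ε₀)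
    (h : ∀ x' : X →L[ℝ] ℝ, ∃ y' : Y →L[ℝ] ℝ,
      (1 / C₀) * ‖y'‖ ^ 2 + (1 / ε₀) * ‖x'.comp R - y'.comp O‖ ^ 2 ≤ ‖x'‖ ^ 2) :
    ∀ z : Z, ‖R z‖ ^ 2 ≤ C₀ * ‖O z‖ ^ 2 + ε₀ * ‖z‖ ^ 2 := by
  intro z
  by_cases hRz : R z = 0
  · simp [hRz]
    positivity
  · obtain ⟨x', hx1, hx2⟩ := exists_dual_vector ℝ (R z) (norm_ne_zero_iff.mpr hRz)
    obtain ⟨y', hy⟩ := h x'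
    rw [hx1] at hy
    simp only [one_pow] at hy
    -- abbreviations
    set a := ‖y'‖ with ha
    set c := ‖x'.comp R - y'.comp O‖ with hc
    set b := ‖O z‖ with hb
    set d := ‖z‖ with hd
    have ha0 : 0 ≤ a := norm_nonneg _
    have hc0 : 0 ≤ c := norm_nonneg _
    have hb0 : 0 ≤ b := norm_nonneg _
    have hd0 : 0 ≤ d := norm_nonneg _
    have key : ‖R z‖ ≤ a * b + c * d := by
      have h1 : x' (R z) = (x'.comp R - y'.comp O) z + y' (O z) := by
        simp [ContinuousLinearMap.comp_apply]
      have h2 : (x'.comp R - y'.comp O) z ≤ c * d :=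
        le_trans (le_abs_self _) ((x'.comp R - y'.comp O).le_opNorm z)
      have h3 : y' (O z) ≤ a * b :=
        le_trans (le_abs_self _) (y'.le_opNorm (O z))
      have : (‖R z‖ : ℝ) = x' (R z) := by
        have := hx2
        simpa using this.symm
      linarith [this, h1 ▸ (by linarith : (x'.comp R - y'.comp O) z + y' (O z) ≤ a * b + c * d)]
    have hr0 : 0 ≤ ‖R z‖ := norm_nonneg _
    have sq_le : ‖R z‖ ^ 2 ≤ (a * b + c * d) ^ 2 := by
      have habcd : 0 ≤ a * b + c * d := by positivity
      nlinarith
    have cs : (a * b + c * d) ^ 2 ≤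
        ((1 / C₀) * a ^ 2 + (1 / ε₀) * c ^ 2) * (C₀ * b ^ 2 + ε₀ * d ^ 2) := by
      rw [div_mul_eq_mul_div, div_mul_eq_mul_div, one_mul, one_mul, div_add_div _ _ (ne_of_gt hC) (ne_of_gt hε), div_mul_eq_mul_div,
        le_div_iff₀ (by positivity)]
      nlinarith [sq_nonneg (ε₀ * (a * d) - C₀ * (c * b)), mul_pos hC hε,
        sq_nonneg (a * b - c * d), sq_nonneg (a * b + c * d)]
    have hbound : (1 / C₀) * a ^ 2 + (1 / ε₀) * c ^ 2 ≤ 1 := hy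
    have hRHS0 : 0 ≤ C₀ * b ^ 2 + ε₀ * d ^ 2 := by positivity
    calc ‖R z‖ ^ 2 ≤ (a * b + c * d) ^ 2 := sq_le
      _ ≤ ((1 / C₀) * a ^ 2 + (1 / ε₀) * c ^ 2) * (C₀ * b ^ 2 + ε₀ * d ^ 2) := cs
      _ ≤ 1 * (C₀ * b ^ 2 + ε₀ * d ^ 2) := mul_le_mul_of_nonneg_right hbound hRHS0
      _ = C₀ * b ^ 2 + ε₀ * d ^ 2 := one_mul _
end

section
/- Let X, Y, Z be Banach spaces, R ∈ L(Z, X), O ∈ L(Z, Y), and C₀ > 0, ε₀ > 0. Suppose ‖Rz‖²_X ≤ C₀‖Oz‖²_Y + ε₀‖z‖²_Z for every z ∈ Z. Then for each x* ∈ X* there exists y* ∈ Y* such that (1/C₀)‖y*‖²_{Y*} + (1/ε₀)‖R*x* − O*y*‖²_{Z*} ≤ ‖x*‖²_{X*}. -/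
set_option maxHeartbeats 1000000 in
/-- Dual of the L² product: the squared norms of the component functionals sum to at most
the squared norm of the functional. -/
lemma dual_prodL2_sq {Y Z : Type*} [NormedAddCommGroup Y] [NormedSpace ℝ Y]
    [NormedAddCommGroup Z] [NormedSpace ℝ Z]
    (g : WithLp 2 (Y × Z) →L[ℝ] ℝ) :
    ‖g.comp ((WithLp.prodContinuousLinearEquiv 2 ℝ Y Z).symm.toContinuousLinearMap.comp
        (ContinuousLinearMap.inl ℝ Y Z))‖ ^ 2 +
      ‖g.comp ((WithLp.prodContinuousLinearEquiv 2 ℝ Y Z).symm.toContinuousLinearMap.comp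
        (ContinuousLinearMap.inr ℝ Y Z))‖ ^ 2 ≤ ‖g‖ ^ 2 := by
  set η := g.comp ((WithLp.prodContinuousLinearEquiv 2 ℝ Y Z).symm.toContinuousLinearMap.comp
    (ContinuousLinearMap.inl ℝ Y Z)) with hη
  set ζ := g.comp ((WithLp.prodContinuousLinearEquiv 2 ℝ Y Z).symm.toContinuousLinearMap.comp
    (ContinuousLinearMap.inr ℝ Y Z)) with hζ
  set A := ‖η‖ with hA
  set B := ‖ζ‖ with hB
  have hA0 : 0 ≤ A := norm_nonneg _
  have hB0 : 0 ≤ B := norm_nonneg _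
  have key : A ^ 2 + B ^ 2 ≤ ‖g‖ * Real.sqrt (A ^ 2 + B ^ 2) := by
    apply le_of_forall_pos_le_add
    intro ε hε
    set δ := ε / (A + B + 1) with hδdef
    have hδ : 0 < δ := div_pos hε (by linarith)
    -- choose near-maximizers
    obtain ⟨y, hy1, hy2⟩ := η.exists_lt_apply_of_lt_opNorm (show A - δ < ‖η‖ by
      rw [← hA]; linarith)
    obtain ⟨z, hz1, hz2⟩ := ζ.exists_lt_apply_of_lt_opNorm (show B - δ < ‖ζ‖ by
      rw [← hB]; linarith)
    rw [Real.norm_eq_abs] at hy2 hz2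
    set y₀ := if 0 ≤ η y then y else -y with hy₀def
    set z₀ := if 0 ≤ ζ z then z else -z with hz₀def
    have hy₀n : ‖y₀‖ ≤ 1 := by
      rw [hy₀def]; split_ifs <;> simpa using hy1.le
    have hz₀n : ‖z₀‖ ≤ 1 := by
      rw [hz₀def]; split_ifs <;> simpa using hz1.le
    have hy₀ : A - δ < η y₀ := by
      rw [hy₀def]; split_ifs with hc
      · rwa [abs_of_nonneg hc] at hy2
      · rw [map_neg]; rwa [abs_of_neg (not_le.1 hc)] at hy2
    have hz₀ : B - δ < ζ z₀ := by
      rw [hz₀def]; split_ifs with hc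
      · rwa [abs_of_nonneg hc] at hz2
      · rw [map_neg]; rwa [abs_of_neg (not_le.1 hc)] at hz2
    set w : WithLp 2 (Y × Z) := (WithLp.equiv 2 (Y × Z)).symm (A • y₀, B • z₀) with hw
    have hgw : g w = A * η y₀ + B * ζ z₀ := by
      have h1 : w = (WithLp.prodContinuousLinearEquiv 2 ℝ Y Z).symm.toContinuousLinearMap
            (A • y₀, (0 : Z)) +
          (WithLp.prodContinuousLinearEquiv 2 ℝ Y Z).symm.toContinuousLinearMap
            ((0 : Y), B • z₀) := by
        rw [← map_add]
        simp [hw, Prod.ext_iff]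
      rw [h1, map_add]
      have e1 : g ((WithLp.prodContinuousLinearEquiv 2 ℝ Y Z).symm.toContinuousLinearMap
          (A • y₀, (0 : Z))) = η (A • y₀) := rfl
      have e2 : g ((WithLp.prodContinuousLinearEquiv 2 ℝ Y Z).symm.toContinuousLinearMap
          ((0 : Y), B • z₀)) = ζ (B • z₀) := rfl
      rw [e1, e2, map_smul, map_smul, smul_eq_mul, smul_eq_mul]
    have hwn : ‖w‖ ≤ Real.sqrt (A ^ 2 + B ^ 2) := by
      rw [WithLp.prod_norm_eq_of_L2]
      apply Real.sqrt_le_sqrt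
      rw [hw, WithLp.equiv_symm_apply, WithLp.toLp_fst, WithLp.toLp_snd, norm_smul, norm_smul, Real.norm_eq_abs, abs_of_nonneg hA0,
        Real.norm_eq_abs, abs_of_nonneg hB0, mul_pow, mul_pow]
      have : ‖y₀‖ ^ 2 ≤ 1 := by nlinarith [norm_nonneg y₀]
      have : ‖z₀‖ ^ 2 ≤ 1 := by nlinarith [norm_nonneg z₀]
      nlinarith [sq_nonneg A, sq_nonneg B]
    have hgw2 : g w ≤ ‖g‖ * Real.sqrt (A ^ 2 + B ^ 2) := by
      calc g w ≤ |g w| := le_abs_self _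
        _ ≤ ‖g‖ * ‖w‖ := by simpa [Real.norm_eq_abs] using g.le_opNorm w
        _ ≤ ‖g‖ * Real.sqrt (A ^ 2 + B ^ 2) :=
            mul_le_mul_of_nonneg_left hwn (norm_nonneg _)
    have hδe : δ * (A + B + 1) = ε := by
      rw [hδdef]; field_simp
    nlinarith [mul_le_mul_of_nonneg_left hy₀.le hA0, mul_le_mul_of_nonneg_left hz₀.le hB0,
      hgw, hgw2, hδ.le, mul_nonneg hδ.le hA0, mul_nonneg hδ.le hB0]
  rcases eq_or_lt_of_le (by positivity : (0:ℝ) ≤ A ^ 2 + B ^ 2) with h0 | h0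
  · rw [← h0]; positivity
  · have hS : 0 < Real.sqrt (A ^ 2 + B ^ 2) := Real.sqrt_pos.2 h0
    have hsq : Real.sqrt (A ^ 2 + B ^ 2) ^ 2 = A ^ 2 + B ^ 2 :=
      Real.sq_sqrt (by positivity)
    have hle : Real.sqrt (A ^ 2 + B ^ 2) ≤ ‖g‖ := by
      have h2 : Real.sqrt (A ^ 2 + B ^ 2) * Real.sqrt (A ^ 2 + B ^ 2) ≤
          ‖g‖ * Real.sqrt (A ^ 2 + B ^ 2) := by
        calc Real.sqrt (A ^ 2 + B ^ 2) * Real.sqrt (A ^ 2 + B ^ 2) = A ^ 2 + B ^ 2 := by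
              rw [← pow_two, hsq]
          _ ≤ _ := key
      exact le_of_mul_le_mul_right h2 hS
    calc A ^ 2 + B ^ 2 = Real.sqrt (A ^ 2 + B ^ 2) ^ 2 := hsq.symm
      _ ≤ ‖g‖ ^ 2 := pow_le_pow_left₀ (Real.sqrt_nonneg _) hle 2

set_option maxHeartbeats 1000000 in
/-- If `‖Rz‖² ≤ C₀‖Oz‖² + ε₀‖z‖²` for all `z ∈ Z`, then for each `x* ∈ X*` there exists
`y* ∈ Y*` with `(1/C₀)‖y*‖² + (1/ε₀)‖R*x* − O*y*‖² ≤ ‖x*‖²`.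
Here the Banach-space adjoint `R*x*` is `x* ∘ R`. -/
theorem observability_of_controllability
    {X Y Z : Type*} [NormedAddCommGroup X] [NormedSpace ℝ X]
    [NormedAddCommGroup Y] [NormedSpace ℝ Y]
    [NormedAddCommGroup Z] [NormedSpace ℝ Z]
    (R : Z →L[ℝ] X) (O : Z →L[ℝ] Y) (C₀ ε₀ : ℝ) (hC : 0 < C₀) (hε : 0 < ε₀)
    (h : ∀ z : Z, ‖R z‖ ^ 2 ≤ C₀ * ‖O z‖ ^ 2 + ε₀ * ‖z‖ ^ 2) :
    ∀ x' : X →L[ℝ] ℝ, ∃ y' : Y →L[ℝ] ℝ,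
      (1 / C₀) * ‖y'‖ ^ 2 + (1 / ε₀) * ‖x'.comp R - y'.comp O‖ ^ 2 ≤ ‖x'‖ ^ 2 := by
  intro x'
  set s := Real.sqrt C₀ with hs
  set t := Real.sqrt ε₀ with ht
  have hs0 : 0 < s := Real.sqrt_pos.2 hC
  have ht0 : 0 < t := Real.sqrt_pos.2 hε
  have hs2 : s ^ 2 = C₀ := Real.sq_sqrt hC.le
  have ht2 : t ^ 2 = ε₀ := Real.sq_sqrt hε.le
  set eSym := (WithLp.prodContinuousLinearEquiv 2 ℝ Y Z).symm.toContinuousLinearMap with heSym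
  set T : Z →L[ℝ] WithLp 2 (Y × Z) :=
    eSym.comp ((s • O).prod (t • ContinuousLinearMap.id ℝ Z)) with hT
  have hTapp : ∀ z : Z, T z = (WithLp.equiv 2 (Y × Z)).symm (s • O z, t • z) := fun z => rfl
  have hTsnd : ∀ z : Z, (T z).snd = t • z := by
    intro z; rw [hTapp z, WithLp.equiv_symm_apply, WithLp.toLp_snd]
  have hTfst : ∀ z : Z, (T z).fst = s • O z := by
    intro z; rw [hTapp z, WithLp.equiv_symm_apply, WithLp.toLp_fst]
  have hTinj : Function.Injective T.toLinearMap := by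
    intro z₁ z₂ hz
    have h2 : t • z₁ = t • z₂ := by
      rw [← hTsnd z₁, ← hTsnd z₂]; exact congrArg (fun v : WithLp 2 (Y × Z) => v.snd) hz
    exact smul_right_injective Z ht0.ne' h2
  have hTnorm : ∀ z : Z, ‖T z‖ ^ 2 = C₀ * ‖O z‖ ^ 2 + ε₀ * ‖z‖ ^ 2 := by
    intro z
    rw [WithLp.prod_norm_sq_eq_of_L2, hTfst, hTsnd, norm_smul, norm_smul,
      Real.norm_eq_abs, abs_of_pos hs0, Real.norm_eq_abs, abs_of_pos ht0,
      mul_pow, mul_pow, hs2, ht2]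
  have hRT : ∀ z : Z, ‖R z‖ ≤ ‖T z‖ := by
    intro z
    have h1 : ‖R z‖ ^ 2 ≤ ‖T z‖ ^ 2 := by rw [hTnorm]; exact h z
    nlinarith [norm_nonneg (R z), norm_nonneg (T z)]
  -- the functional on the range of T
  set E : Subspace ℝ (WithLp 2 (Y × Z)) := LinearMap.range T.toLinearMap with hE
  set e : Z ≃ₗ[ℝ] E := LinearEquiv.ofInjective T.toLinearMap hTinj with he
  set f₀ : E →ₗ[ℝ] ℝ := (x'.comp R).toLinearMap ∘ₗ e.symm.toLinearMap with hf₀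
  have hf₀app : ∀ z : Z, f₀ (e z) = x' (R z) := by
    intro z
    simp [hf₀, LinearEquiv.symm_apply_apply]
  have hecoe : ∀ z : Z, ((e z : E) : WithLp 2 (Y × Z)) = T z := fun z =>
    LinearEquiv.ofInjective_apply _ _
  have hbound : ∀ v : E, ‖f₀ v‖ ≤ ‖x'‖ * ‖v‖ := by
    intro v
    obtain ⟨z, hz⟩ : ∃ z : Z, e z = v := ⟨e.symm v, e.apply_symm_apply v⟩
    rw [← hz, hf₀app]
    calc ‖x' (R z)‖ ≤ ‖x'‖ * ‖R z‖ := x'.le_opNorm _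
      _ ≤ ‖x'‖ * ‖T z‖ := mul_le_mul_of_nonneg_left (hRT z) (norm_nonneg _)
      _ = ‖x'‖ * ‖(e z : E)‖ := by rw [← hecoe z]; rfl
  set f : E →L[ℝ] ℝ := f₀.mkContinuous ‖x'‖ hbound with hf
  have hfnorm : ‖f‖ ≤ ‖x'‖ := f₀.mkContinuous_norm_le (norm_nonneg _) hbound
  obtain ⟨g, hgext, hgnorm⟩ := exists_extension_norm_eq E f
  have hgle : ‖g‖ ≤ ‖x'‖ := hgnorm.le.trans hfnorm
  set η := g.comp (eSym.comp (ContinuousLinearMap.inl ℝ Y Z)) with hη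
  set ζ := g.comp (eSym.comp (ContinuousLinearMap.inr ℝ Y Z)) with hζ
  have hgT : ∀ z : Z, g (T z) = x' (R z) := by
    intro z
    have h1 : g ((e z : E) : WithLp 2 (Y × Z)) = f (e z) := hgext (e z)
    rw [hecoe z] at h1
    rw [h1]
    show f₀ (e z) = x' (R z)
    exact hf₀app z
  have hsplit : ∀ z : Z, g (T z) = s * η (O z) + t * ζ z := by
    intro z
    have h1 : T z = eSym (s • O z, (0 : Z)) + eSym ((0 : Y), t • z) := by
      rw [← map_add]
      show T z = eSym (s • O z + 0, 0 + t • z)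
      rw [add_zero, zero_add]; rfl
    rw [h1, map_add]
    have e1 : g (eSym (s • O z, (0 : Z))) = η (s • O z) := rfl
    have e2 : g (eSym ((0 : Y), t • z)) = ζ (t • z) := rfl
    rw [e1, e2, map_smul, map_smul, smul_eq_mul, smul_eq_mul]
  refine ⟨s • η, ?_⟩
  have hdiff : x'.comp R - (s • η).comp O = t • ζ := by
    ext z
    have h1 := (hgT z).symm.trans (hsplit z)
    simp only [ContinuousLinearMap.sub_apply, ContinuousLinearMap.coe_comp', Function.comp_apply,
      ContinuousLinearMap.smul_apply, smul_eq_mul]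
    linarith
  have n1 : ‖s • η‖ = s * ‖η‖ := by
    rw [norm_smul s η, Real.norm_eq_abs, abs_of_pos hs0]
  have n2 : ‖t • ζ‖ = t * ‖ζ‖ := by
    rw [norm_smul t ζ, Real.norm_eq_abs, abs_of_pos ht0]
  rw [hdiff, n1, n2, mul_pow, mul_pow, hs2, ht2]
  have hkey : ‖η‖ ^ 2 + ‖ζ‖ ^ 2 ≤ ‖g‖ ^ 2 := dual_prodL2_sq g
  have hg2 : ‖g‖ ^ 2 ≤ ‖x'‖ ^ 2 := pow_le_pow_left₀ (norm_nonneg _) hgle 2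
  have hC' : (1 / C₀) * (C₀ * ‖η‖ ^ 2) = ‖η‖ ^ 2 := by field_simp
  have hε' : (1 / ε₀) * (ε₀ * ‖ζ‖ ^ 2) = ‖ζ‖ ^ 2 := by field_simp
  rw [hC', hε']
  linarith
end

section
/- Let T > 0 and η ∈ (0,1). Define B = ⋃_{k=1}^{∞} ( T/(k+η), T/k ) ⊂ (0, ∞). Then B is measurable and lim_{h→0⁺} |B ∩ (0, h)| / h = η, where |·| denotes Lebesgue measure. -/
open MeasureTheory Set Filter

private lemma tele_hasSum (c : ℝ) (hc : 0 < c) :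
    HasSum (fun k : ℕ => 1/((k:ℝ)+c) - 1/((k:ℝ)+c+1)) (1/c) := by
  have h0 : ∀ i : ℕ, 0 ≤ 1/((i:ℝ)+c) - 1/((i:ℝ)+c+1) := by
    intro i
    have h1 : (0:ℝ) < (i:ℝ)+c := by positivity
    have : 1/((i:ℝ)+c+1) ≤ 1/((i:ℝ)+c) := by
      apply one_div_le_one_div_of_le h1; linarith
    linarith
  rw [hasSum_iff_tendsto_nat_of_nonneg h0]
  have key : ∀ N : ℕ, ∑ k ∈ Finset.range N, (1/((k:ℝ)+c) - 1/((k:ℝ)+c+1))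
      = 1/c - 1/((N:ℝ)+c) := by
    intro N
    have h1 : ∀ k ∈ Finset.range N, (1/((k:ℝ)+c) - 1/((k:ℝ)+c+1))
        = (fun j : ℕ => 1/((j:ℝ)+c)) k - (fun j : ℕ => 1/((j:ℝ)+c)) (k+1) := by
      intro k _; push_cast; ring_nf
    rw [Finset.sum_congr rfl h1, Finset.sum_range_sub' (fun j : ℕ => 1/((j:ℝ)+c)) N]
    norm_num
  simp only [key]
  have : Tendsto (fun N : ℕ => 1/((N:ℝ)+c)) atTop (nhds 0) := by
    simp only [one_div]
    apply Tendsto.comp tendsto_inv_atTop_zero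
    apply tendsto_atTop_add_const_right
    exact tendsto_natCast_atTop_atTop
  simpa using tendsto_const_nhds.sub this

private lemma hdiv {T : ℝ} (hT : 0 < T) : ∀ a b : ℝ, 0 < a → a ≤ b → T/b ≤ T/a := by
  intro a b ha hab
  gcongr

private lemma set_eq (T η : ℝ) (hT : 0 < T) (hη : η ∈ Set.Ioo (0:ℝ) 1) (m : ℕ) :
    (⋃ k : ℕ, Set.Ioo (T / ((k:ℝ) + 1 + η)) (T / ((k:ℝ) + 1))) ∩ Set.Ioo 0 (T/((m:ℝ)+1))
      = ⋃ k : ℕ, Set.Ioo (T / ((k:ℝ) + (m:ℝ) + 1 + η)) (T / ((k:ℝ) + (m:ℝ) + 1)) := by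
  obtain ⟨hη0, hη1⟩ := hη
  ext x
  simp only [mem_inter_iff, mem_iUnion, mem_Ioo]
  constructor
  · rintro ⟨⟨j, hj1, hj2⟩, hx0, hxm⟩
    have hmj : m ≤ j := by
      by_contra hc
      push_neg at hc
      have hjm : (j:ℝ) + 1 ≤ (m:ℝ) := by exact_mod_cast hc
      have : T/((m:ℝ)+1) ≤ T/((j:ℝ)+1+η) := hdiv hT _ _ (by positivity) (by linarith)
      linarith
    have hcast : ((j - m : ℕ):ℝ) + (m:ℝ) = (j:ℝ) := by
      push_cast [Nat.cast_sub hmj]; ring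
    exact ⟨j - m, by rw [hcast]; exact hj1, by rw [hcast]; exact hj2⟩
  · rintro ⟨k, h1, h2⟩
    have hcast : ((k + m : ℕ):ℝ) = (k:ℝ) + (m:ℝ) := by push_cast; ring
    have hpos : 0 < T / ((k:ℝ) + (m:ℝ) + 1 + η) := by positivity
    refine ⟨⟨k + m, by rw [hcast]; exact h1, by rw [hcast]; exact h2⟩, by linarith, ?_⟩
    have : T/((k:ℝ)+(m:ℝ)+1) ≤ T/((m:ℝ)+1) :=
      hdiv hT _ _ (by positivity) (by have : (0:ℝ) ≤ k := Nat.cast_nonneg k; linarith)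
    linarith

private lemma vol_eq (T η : ℝ) (hT : 0 < T) (hη : η ∈ Set.Ioo (0:ℝ) 1) (m : ℕ) (hm : 1 ≤ m) :
    ∃ S : ℝ, volume ((⋃ k : ℕ, Set.Ioo (T / ((k:ℝ) + 1 + η)) (T / ((k:ℝ) + 1)))
        ∩ Set.Ioo 0 (T/((m:ℝ)+1))) = ENNReal.ofReal S
      ∧ η*T/((m:ℝ)+1) ≤ S ∧ S ≤ η*T/(m:ℝ) := by
  obtain ⟨hη0, hη1⟩ := hη
  have hmR : (1:ℝ) ≤ (m:ℝ) := by exact_mod_cast hm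
  set g : ℕ → ℝ := fun k => T/((k:ℝ)+(m:ℝ)+1) - T/((k:ℝ)+(m:ℝ)+1+η) with hg
  have hpos : ∀ k : ℕ, (0:ℝ) < (k:ℝ)+(m:ℝ)+1 := by
    intro k; have : (0:ℝ) ≤ k := Nat.cast_nonneg k; linarith
  have hg0 : ∀ k, 0 ≤ g k := by
    intro k
    have := hdiv hT _ _ (hpos k) (by linarith : ((k:ℝ)+(m:ℝ)+1) ≤ (k:ℝ)+(m:ℝ)+1+η)
    simp only [hg]; linarith
  -- upper bound comparison
  have hub : ∀ k : ℕ, g k ≤ η*T*(1/((k:ℝ)+(m:ℝ)) - 1/((k:ℝ)+(m:ℝ)+1)) := by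
    intro k
    set x : ℝ := (k:ℝ)+(m:ℝ)+1 with hx
    have hx2 : 2 ≤ x := by have : (0:ℝ) ≤ k := Nat.cast_nonneg k; simp only [hx]; linarith
    have h1 : (0:ℝ) < x := by linarith
    have h2 : (0:ℝ) < x + η := by linarith
    have h3 : (0:ℝ) < x - 1 := by linarith
    have e1 : g k = (T*η)/(x*(x+η)) := by
      simp only [hg, hx]
      field_simp
      ring
    have hkm : ((k:ℝ)+(m:ℝ)) ≠ 0 := by
      have : (0:ℝ) ≤ k := Nat.cast_nonneg k; positivity
    have e2 : η*T*(1/((k:ℝ)+(m:ℝ)) - 1/((k:ℝ)+(m:ℝ)+1)) = (T*η)/((x-1)*x) := by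
      simp only [hx]
      field_simp
      ring_nf; field_simp
    rw [e1, e2]
    apply div_le_div_of_nonneg_left (by positivity) (by positivity)
    nlinarith
  -- lower bound comparison
  have hlb : ∀ k : ℕ, η*T*(1/((k:ℝ)+(m:ℝ)+1) - 1/((k:ℝ)+(m:ℝ)+2)) ≤ g k := by
    intro k
    set x : ℝ := (k:ℝ)+(m:ℝ)+1 with hx
    have hx2 : 2 ≤ x := by have : (0:ℝ) ≤ k := Nat.cast_nonneg k; simp only [hx]; linarith
    have h1 : (0:ℝ) < x := by linarith
    have h2 : (0:ℝ) < x + η := by linarith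
    have e1 : g k = (T*η)/(x*(x+η)) := by
      simp only [hg, hx]
      field_simp
      ring
    have e2 : η*T*(1/((k:ℝ)+(m:ℝ)+1) - 1/((k:ℝ)+(m:ℝ)+2)) = (T*η)/(x*(x+1)) := by
      simp only [hx]
      field_simp
      ring
    rw [e1, e2]
    apply div_le_div_of_nonneg_left (by positivity) (by positivity)
    nlinarith
  -- telescoping sums
  have hb : HasSum (fun k : ℕ => η*T*(1/((k:ℝ)+(m:ℝ)) - 1/((k:ℝ)+(m:ℝ)+1))) (η*T/(m:ℝ)) := by
    have H := (tele_hasSum (m:ℝ) (by linarith)).mul_left (η*T)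
    rwa [mul_one_div] at H
  have hl : HasSum (fun k : ℕ => η*T*(1/((k:ℝ)+(m:ℝ)+1) - 1/((k:ℝ)+(m:ℝ)+2))) (η*T/((m:ℝ)+1)) := by
    have H := (tele_hasSum ((m:ℝ)+1) (by linarith)).mul_left (η*T)
    rw [mul_one_div] at H
    have heq : (fun k : ℕ => η*T*(1/((k:ℝ)+((m:ℝ)+1)) - 1/((k:ℝ)+((m:ℝ)+1)+1)))
        = (fun k : ℕ => η*T*(1/((k:ℝ)+(m:ℝ)+1) - 1/((k:ℝ)+(m:ℝ)+2))) := by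
      funext k; ring_nf
    rwa [heq] at H
  have hgsum : Summable g := Summable.of_nonneg_of_le hg0 hub hb.summable
  -- measure computation
  rw [set_eq T η hT ⟨hη0, hη1⟩ m]
  have hd : Pairwise (Function.onFun Disjoint
      (fun k : ℕ => Set.Ioo (T/((k:ℝ)+(m:ℝ)+1+η)) (T/((k:ℝ)+(m:ℝ)+1)))) := by
    have H : ∀ i j : ℕ, i < j →
        Disjoint (Set.Ioo (T/((i:ℝ)+(m:ℝ)+1+η)) (T/((i:ℝ)+(m:ℝ)+1)))
          (Set.Ioo (T/((j:ℝ)+(m:ℝ)+1+η)) (T/((j:ℝ)+(m:ℝ)+1))) := by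
      intro i j hij
      apply Set.disjoint_left.mpr
      rintro x ⟨hx1, _⟩ ⟨_, hy2⟩
      have hij' : (i:ℝ) + 1 ≤ (j:ℝ) := by exact_mod_cast hij
      have : T/((j:ℝ)+(m:ℝ)+1) ≤ T/((i:ℝ)+(m:ℝ)+1+η) :=
        hdiv hT _ _ (by have := hpos i; linarith) (by linarith)
      linarith
    intro i j hij
    rcases hij.lt_or_gt with h | h
    · exact H i j h
    · exact (H j i h).symm
  rw [measure_iUnion hd (fun k => measurableSet_Ioo)]
  have hvol : ∀ k : ℕ, volume (Set.Ioo (T/((k:ℝ)+(m:ℝ)+1+η)) (T/((k:ℝ)+(m:ℝ)+1)))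
      = ENNReal.ofReal (g k) := by
    intro k; rw [Real.volume_Ioo]
  simp_rw [hvol]
  refine ⟨∑' k, g k, (ENNReal.ofReal_tsum_of_nonneg hg0 hgsum).symm, ?_, ?_⟩
  · rw [← hl.tsum_eq]
    exact Summable.tsum_le_tsum hlb hl.summable hgsum
  · rw [← hb.tsum_eq]
    exact Summable.tsum_le_tsum hub hgsum hb.summable

set_option maxHeartbeats 2000000 in
/-- The set `B = ⋃_{k≥1} (T/(k+η), T/k)` is measurable and has Lebesgue density exactly
`η` at `0`, i.e. `|B ∩ (0,h)|/h → η` as `h → 0⁺`. -/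
theorem density_of_union_intervals (T η : ℝ) (hT : 0 < T) (hη : η ∈ Set.Ioo (0 : ℝ) 1) :
    MeasurableSet (⋃ k : ℕ, Set.Ioo (T / ((k : ℝ) + 1 + η)) (T / ((k : ℝ) + 1)))
      ∧ Tendsto
          (fun h : ℝ =>
            (volume ((⋃ k : ℕ, Set.Ioo (T / ((k : ℝ) + 1 + η)) (T / ((k : ℝ) + 1)))
                ∩ Set.Ioo 0 h)).toReal / h)
          (nhdsWithin 0 (Set.Ioi 0)) (nhds η) := by
  obtain ⟨hη0, hη1⟩ := hη
  refine ⟨MeasurableSet.iUnion fun k => measurableSet_Ioo, ?_⟩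
  set B := ⋃ k : ℕ, Set.Ioo (T / ((k : ℝ) + 1 + η)) (T / ((k : ℝ) + 1)) with hB
  -- squeeze
  have hL : Tendsto (fun h : ℝ => η*(T-h)/T) (nhdsWithin 0 (Set.Ioi 0)) (nhds η) := by
    refine Tendsto.mono_left ?_ nhdsWithin_le_nhds
    have hc : Continuous (fun h : ℝ => η*(T-h)/T) := by fun_prop
    have := hc.tendsto 0
    simp only [sub_zero] at this
    rwa [mul_div_assoc, div_self hT.ne', mul_one] at this
  have hU : Tendsto (fun h : ℝ => η*T/(T-2*h)) (nhdsWithin 0 (Set.Ioi 0)) (nhds η) := by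
    refine Tendsto.mono_left ?_ nhdsWithin_le_nhds
    have hc : ContinuousAt (fun h : ℝ => η*T/(T-2*h)) 0 := by
      apply ContinuousAt.div
      · fun_prop
      · fun_prop
      · norm_num; exact hT.ne'
    have := hc.tendsto
    simp only [mul_zero, sub_zero] at this
    rwa [mul_div_assoc, div_self hT.ne', mul_one] at this
  have hev : ∀ᶠ h in nhdsWithin (0:ℝ) (Set.Ioi 0),
      η*(T-h)/T ≤ (volume (B ∩ Set.Ioo 0 h)).toReal / h ∧
      (volume (B ∩ Set.Ioo 0 h)).toReal / h ≤ η*T/(T-2*h) := by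
    filter_upwards [Ioo_mem_nhdsGT_of_mem
      (show (0:ℝ) ∈ Set.Ico 0 (T/4) from ⟨le_refl _, by positivity⟩)] with h hh
    obtain ⟨hh0, hh4⟩ := hh
    set n := ⌊T/h⌋₊ with hn
    have hTh4 : (4:ℝ) < T/h := by rw [lt_div_iff₀ hh0]; linarith
    have hn4 : 4 ≤ n := Nat.le_floor (by push_cast; linarith)
    have hfl1 : (n:ℝ) ≤ T/h := Nat.floor_le (by positivity)
    have hfl2 : T/h < (n:ℝ) + 1 := Nat.lt_floor_add_one _
    have h1 : (n:ℝ) * h ≤ T := (le_div_iff₀ hh0).mp hfl1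
    have h2 : T < ((n:ℝ) + 1) * h := (div_lt_iff₀ hh0).mp hfl2
    have hnR : (4:ℝ) ≤ (n:ℝ) := by exact_mod_cast hn4
    clear_value n
    obtain ⟨m, hmn⟩ : ∃ m : ℕ, m + 1 = n := ⟨n - 1, by omega⟩
    have hmc : (m:ℝ) + 1 = (n:ℝ) := by exact_mod_cast hmn
    obtain ⟨S1, hvol1, hS1l, hS1u⟩ := vol_eq T η hT ⟨hη0, hη1⟩ m (by omega)
    obtain ⟨S2, hvol2, hS2l, hS2u⟩ := vol_eq T η hT ⟨hη0, hη1⟩ n (by omega)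
    have hS1nn : 0 ≤ S1 := le_trans (by positivity) hS1l
    have hVfin : volume (B ∩ Set.Ioo 0 h) < ⊤ :=
      (measure_mono Set.inter_subset_right).trans_lt
        (by rw [Real.volume_Ioo]; exact ENNReal.ofReal_lt_top)
    have hup : (volume (B ∩ Set.Ioo 0 h)).toReal ≤ S1 := by
      have hsub : B ∩ Set.Ioo 0 h ⊆ B ∩ Set.Ioo 0 (T/((m:ℝ)+1)) := by
        apply Set.inter_subset_inter_right
        apply Set.Ioo_subset_Ioo le_rfl
        rw [hmc, le_div_iff₀ (by linarith : (0:ℝ) < (n:ℝ))]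
        linarith
      have h' := ENNReal.toReal_mono ENNReal.ofReal_ne_top ((measure_mono hsub).trans_eq hvol1)
      rwa [ENNReal.toReal_ofReal hS1nn] at h'
    have hS2nn : 0 ≤ S2 := le_trans (by positivity) hS2l
    have hlow : S2 ≤ (volume (B ∩ Set.Ioo 0 h)).toReal := by
      have hsub : B ∩ Set.Ioo 0 (T/((n:ℝ)+1)) ⊆ B ∩ Set.Ioo 0 h := by
        apply Set.inter_subset_inter_right
        apply Set.Ioo_subset_Ioo le_rfl
        rw [div_le_iff₀ (by linarith : (0:ℝ) < (n:ℝ)+1)]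
        linarith
      have h' := hvol2 ▸ measure_mono hsub
      have h'' := ENNReal.toReal_mono hVfin.ne h'
      rwa [ENNReal.toReal_ofReal hS2nn] at h''
    set Vt := (volume (B ∩ Set.Ioo 0 h)).toReal with hVt
    have hVt0 : 0 ≤ Vt := ENNReal.toReal_nonneg
    clear_value Vt
    have hmR : (3:ℝ) ≤ (m:ℝ) := by linarith
    have hkup : Vt * (m:ℝ) ≤ η*T := by
      have := (le_div_iff₀ (by linarith : (0:ℝ) < (m:ℝ))).mp (hup.trans hS1u)
      linarith
    have hklow : η*T ≤ Vt * ((n:ℝ)+1) := by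
      have := (div_le_iff₀ (by linarith : (0:ℝ) < (n:ℝ)+1)).mp (hS2l.trans hlow)
      linarith
    have hρ : (0:ℝ) < ((n:ℝ)+1)*h := by positivity
    constructor
    · -- lower bound : η*(T-h)/T ≤ Vt / h
      have step1 : η*(T-h)/T ≤ η*T/(((n:ℝ)+1)*h) := by
        rw [div_le_div_iff₀ hT hρ]
        have hTm : (0:ℝ) ≤ T - h := by linarith
        nlinarith [mul_le_mul_of_nonneg_left h1 (mul_nonneg hη0.le hTm),
          mul_nonneg hη0.le (sq_nonneg h)]
      have step2 : η*T/(((n:ℝ)+1)*h) ≤ Vt/h := by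
        rw [div_le_div_iff₀ hρ hh0]
        nlinarith [mul_le_mul_of_nonneg_right hklow hh0.le]
      exact step1.trans step2
    · -- upper bound : Vt / h ≤ η*T/(T-2*h)
      have step1 : Vt/h ≤ (η*T/(m:ℝ))/h := by
        gcongr
        exact hup.trans hS1u
      have step2 : (η*T/(m:ℝ))/h ≤ η*T/(T-2*h) := by
        rw [div_div]
        apply div_le_div_of_nonneg_left (by positivity) (by linarith)
        have h2' : T < ((m:ℝ)+2)*h := by
          have he : ((n:ℝ)+1) = (m:ℝ)+2 := by linarith
          rw [he] at h2; exact h2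
        nlinarith
      exact step1.trans step2
  exact tendsto_of_tendsto_of_tendsto_of_le_of_le' hL hU
    (hev.mono fun h H => H.1) (hev.mono fun h H => H.2)
end
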